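/- arXiv:2505.14371 — 4 statements merged into one kernel-verified Lean document; each statement's English description precedes it below -/
import Mathlib

section
/- Let d ≥ 1, let q ≥ 1 be an integer, and let v ∈ ℝ^d be nonzero with normalized coordinates u_i = |v_i|/‖v‖_q ∈ [0,1]. Suppose the index set {1,…,d} is partitioned into M types, and for each type m there is a sequence of quantization levels 0 = ℓ^m_0 < ℓ^m_1 < ⋯ < ℓ^m_{α_m} < ℓ^m_{α_m+1} = 1. For each coordinate i of type m, let τ^m(u_i) be an index with ℓ^m_{τ^m(u_i)} ≤ u_i ≤ ℓ^m_{τ^m(u_i)+1}. Define ℓ̄^m = max_{1≤j≤α_m} ℓ^m_{j+1}/ℓ^m_j, ℓ̄ = max_{1≤m≤M} ℓ̄^m, ℓ̄₁ = max_{1≤m≤M} ℓ^m_1, and d_th = (2/ℓ̄₁)^{min(2,q)}. Then ‖v‖_q² · Σ_{m=1}^M Σ_{i of type m} (ℓ^m_{τ^m(u_i)+1} − u_i)(u_i − ℓ^m_{τ^m(u_i)}) ≤ ε_Q ‖v‖₂², where ε_Q = (ℓ̄−1)²/(4ℓ̄) + (ℓ̄₁ d^{1/min(q,2)} − 1)·𝟙[d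 ≥ d_th] + (ℓ̄₁²/4) d^{2/min(q,2)}·𝟙[d < d_th]. -/
lemma lwq_cell_bd {a b u L : ℝ} (_ha : 0 < a) (hau : a ≤ u) (_hub : u ≤ b)
    (hbL : b ≤ L * a) (hL : 1 ≤ L) :
    (b - u) * (u - a) ≤ (L - 1) ^ 2 / (4 * L) * u ^ 2 := by
  have hL0 : (0:ℝ) < L := by linarith
  rw [div_mul_eq_mul_div, le_div_iff₀ (by positivity)]
  nlinarith [sq_nonneg ((L + 1) * u - 2 * L * a),
    mul_nonneg (mul_nonneg hL0.le (sub_nonneg.2 hbL)) (sub_nonneg.2 hau)]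

lemma lwq_core2 {x S0 S1 y : ℝ} (hx : 2 ≤ x) (hS0 : 0 ≤ S0) (hS1 : 0 ≤ S1)
    (hS : 1 ≤ S0 + S1) (hy : 0 ≤ y) (hy2 : y ^ 2 ≤ x ^ 2 * S0) :
    y ≤ x * S0 + (x - 1) * S1 := by
  rcases le_or_gt 1 S0 with h | h
  · have h2 : y ^ 2 ≤ (x * S0) ^ 2 := by nlinarith
    have h1 : y ≤ x * S0 :=
      (pow_le_pow_iff_left₀ hy (by positivity) (by norm_num)).1 h2
    nlinarith
  · have hx1 : S0 ≤ (x - 1) ^ 2 := by nlinarith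
    have h2 : y ^ 2 ≤ (S0 + x - 1) ^ 2 := by nlinarith
    have h1 : y ≤ S0 + x - 1 :=
      (pow_le_pow_iff_left₀ hy (by linarith) (by norm_num)).1 h2
    nlinarith [mul_nonneg (by linarith : (0:ℝ) ≤ x - 1) (by linarith : (0:ℝ) ≤ S0 + S1 - 1)]

set_option maxHeartbeats 2000000 in
lemma lwq_half {c : ℝ} (hc0 : 0 ≤ c) (h : 1/4 ≤ c ^ 2) : 1/2 ≤ c := by
  nlinarith [hc0, h]

lemma lwq_u0le {U0 U1 c : ℝ} (h0 : 0 ≤ U0) (h1 : 0 ≤ U1) (hsum : U0 + U1 = 1)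
    (hc : 1/2 ≤ c) : U0 ≤ (U0 + c * U1) ^ 2 := by
  nlinarith [sq_nonneg (c * U1), mul_nonneg (mul_nonneg (by linarith : (0:ℝ) ≤ 2*c - 1) h0) h1]

lemma lwq_amgm (l w : ℝ) : l * w - w ^ 2 ≤ l ^ 2 / 4 := by
  nlinarith [sq_nonneg (l - 2 * w)]

lemma lwq_comb1 {T lb U0 S0 S1 A x : ℝ} (hT : T ≤ (lb * U0 - S0) + A * S1)
    (hkey : lb * U0 ≤ x * S0 + (x - 1) * S1) (hA0 : 0 ≤ A) (hS0 : 0 ≤ S0) :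
    T ≤ (A + (x - 1)) * (S0 + S1) := by
  nlinarith [mul_nonneg hA0 hS0]

/-- **Variance bound for layer-wise quantization** (deterministic core).
`v : Fin d → ℝ` is a nonzero vector, `typeOf` assigns each coordinate one of `M` types,
`lev m` is the sequence of quantization levels of type `m` (indexed `0, …, α m + 1`,
with `lev m 0 = 0`, `lev m (α m + 1) = 1`, strictly increasing), `u i = |v i| / ‖v‖_q`
are the normalized coordinates, and `τ i` is the index of the quantization cell of `u i`.
`lbar m` is the maximal ratio of consecutive levels of type `m`, `lbarAll` its maximum
over types, `lbar1` the maximal first level, and `dth = (2/lbar1)^{min 2 q}`. -/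
theorem layerwise_quantization_variance_bound
    {d M : ℕ} (hd : 1 ≤ d) (q : ℕ) (hq : 1 ≤ q)
    (v : Fin d → ℝ) (hv : v ≠ 0)
    (typeOf : Fin d → Fin M)
    (α : Fin M → ℕ) (hα : ∀ m, 1 ≤ α m)
    (lev : Fin M → ℕ → ℝ)
    (hlev0 : ∀ m, lev m 0 = 0)
    (hlevtop : ∀ m, lev m (α m + 1) = 1)
    (hlevmono : ∀ m, ∀ j ≤ α m, lev m j < lev m (j + 1))
    (u : Fin d → ℝ)
    (hu : ∀ i, u i = |v i| / (∑ j, |v j| ^ q) ^ ((1 : ℝ) / q))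
    (τ : Fin d → ℕ)
    (hτle : ∀ i, τ i ≤ α (typeOf i))
    (hτ : ∀ i, lev (typeOf i) (τ i) ≤ u i ∧ u i ≤ lev (typeOf i) (τ i + 1))
    (lbar : Fin M → ℝ)
    (hlbar : ∀ m, IsGreatest ((fun j => lev m (j + 1) / lev m j) '' Set.Icc 1 (α m)) (lbar m))
    (lbarAll lbar1 : ℝ)
    (hlbarAll : IsGreatest (Set.range lbar) lbarAll)
    (hlbar1 : IsGreatest (Set.range fun m => lev m 1) lbar1)
    (dth εQ : ℝ)
    (hdth : dth = (2 / lbar1) ^ (min 2 q))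
    (hεQ : εQ = (lbarAll - 1) ^ 2 / (4 * lbarAll)
        + (lbar1 * (d : ℝ) ^ ((1 : ℝ) / ((min q 2 : ℕ) : ℝ)) - 1)
            * (if dth ≤ (d : ℝ) then 1 else 0)
        + (lbar1 ^ 2 / 4) * (d : ℝ) ^ ((2 : ℝ) / ((min q 2 : ℕ) : ℝ))
            * (if (d : ℝ) < dth then 1 else 0)) :
    ((∑ j, |v j| ^ q) ^ ((1 : ℝ) / q)) ^ 2
        * ∑ i, (lev (typeOf i) (τ i + 1) - u i) * (u i - lev (typeOf i) (τ i))
      ≤ εQ * ∑ i, v i ^ 2 := by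
  classical
  have hq0 : (q : ℝ) ≠ 0 := Nat.cast_ne_zero.2 (by omega)
  -- the normalizing constant
  set X : ℝ := ∑ j, |v j| ^ q with hXdef
  obtain ⟨j0, hj0⟩ : ∃ j, v j ≠ 0 := Function.ne_iff.1 hv
  have hXpos : 0 < X :=
    Finset.sum_pos' (fun i _ => pow_nonneg (abs_nonneg _) _)
      ⟨j0, Finset.mem_univ j0, pow_pos (abs_pos.2 hj0) q⟩
  set N : ℝ := X ^ ((1 : ℝ) / q) with hNdef
  have hNpos : 0 < N := Real.rpow_pos_of_pos hXpos _
  have hNq : N ^ q = X := by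
    rw [hNdef, ← Real.rpow_natCast (X ^ ((1:ℝ)/q)) q, ← Real.rpow_mul hXpos.le,
      one_div, inv_mul_cancel₀ hq0, Real.rpow_one]
  have hu0 : ∀ i, 0 ≤ u i := fun i => by
    rw [hu i]; positivity
  have habs : ∀ i, |v i| = N * u i := fun i => by
    rw [hu i]; field_simp
  have hsumq : ∑ i, u i ^ q = 1 := by
    have : ∀ i, u i ^ q = |v i| ^ q / X := by
      intro i; rw [hu i, div_pow, hNq]
    rw [Finset.sum_congr rfl fun i _ => this i, ← Finset.sum_div, ← hXdef,
      div_self hXpos.ne']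
  have hu1 : ∀ i, u i ≤ 1 := by
    intro i
    have h1 : u i ^ q ≤ 1 := by
      rw [← hsumq]
      exact Finset.single_le_sum (fun i _ => pow_nonneg (hu0 i) q) (Finset.mem_univ i)
    exact (pow_le_one_iff_of_nonneg (hu0 i) (by omega)).1 h1
  -- monotonicity of levels
  have hmono' : ∀ m, ∀ k j : ℕ, j ≤ k → k ≤ α m + 1 → lev m j ≤ lev m k := by
    intro m k
    induction k with
    | zero =>
      intro j hjk _
      have hj : j = 0 := by omega
      simp [hj]
    | succ n ih =>
      intro j hjk hk
      rcases Nat.lt_or_ge j (n + 1) with h | h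
      · exact (ih j (by omega) (by omega)).trans (hlevmono m n (by omega)).le
      · have hj : j = n + 1 := by omega
        simp [hj]
  have hmono : ∀ m, ∀ j k : ℕ, j ≤ k → k ≤ α m + 1 → lev m j ≤ lev m k :=
    fun m j k hjk hk => hmono' m k j hjk hk
  have hlevpos : ∀ m, ∀ j : ℕ, 1 ≤ j → j ≤ α m + 1 → 0 < lev m j := by
    intro m j h1 hj
    have h0 : lev m 0 < lev m 1 := hlevmono m 0 (Nat.zero_le _)
    rw [hlev0 m] at h0
    exact h0.trans_le (hmono m 1 j h1 hj)
  -- facts about lbar1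
  obtain ⟨m0, hm0⟩ := hlbar1.1
  have hl1pos : 0 < lbar1 := hm0 ▸ hlevpos m0 1 le_rfl (by omega)
  have hl1le1 : lbar1 ≤ 1 := by
    rw [← hm0, ← hlevtop m0]
    exact hmono m0 1 (α m0 + 1) (by omega) le_rfl
  have hlev1le : ∀ m, lev m 1 ≤ lbar1 := fun m => hlbar1.2 ⟨m, rfl⟩
  -- facts about lbarAll
  set A : ℝ := (lbarAll - 1) ^ 2 / (4 * lbarAll) with hAdef
  obtain ⟨m1, hm1⟩ := hlbarAll.1
  have hLgt1 : 1 < lbarAll := by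
    have hmem : lev m1 (1 + 1) / lev m1 1 ∈
        (fun j => lev m1 (j + 1) / lev m1 j) '' Set.Icc 1 (α m1) :=
      ⟨1, ⟨le_rfl, hα m1⟩, rfl⟩
    have h1 : 1 < lev m1 (1 + 1) / lev m1 1 :=
      (one_lt_div (hlevpos m1 1 le_rfl (by omega))).2 (hlevmono m1 1 (hα m1))
    exact h1.trans_le (((hlbar m1).2 hmem).trans (hm1 ▸ hlbarAll.2 ⟨m1, rfl⟩))
  have hA0 : 0 ≤ A := by rw [hAdef]; positivity
  -- per-coordinate cell bounds
  have hratio : ∀ i, 1 ≤ τ i →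
      lev (typeOf i) (τ i + 1) ≤ lbarAll * lev (typeOf i) (τ i) := by
    intro i h1
    have hapos : 0 < lev (typeOf i) (τ i) := hlevpos _ _ h1 (by have := hτle i; omega)
    have hmem : lev (typeOf i) (τ i + 1) / lev (typeOf i) (τ i) ∈
        (fun j => lev (typeOf i) (j + 1) / lev (typeOf i) j) '' Set.Icc 1 (α (typeOf i)) :=
      ⟨τ i, ⟨h1, hτle i⟩, rfl⟩
    have := ((hlbar (typeOf i)).2 hmem).trans (hlbarAll.2 ⟨typeOf i, rfl⟩)
    exact (div_le_iff₀ hapos).1 this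
  have hcell : ∀ i, 1 ≤ τ i →
      (lev (typeOf i) (τ i + 1) - u i) * (u i - lev (typeOf i) (τ i)) ≤ A * u i ^ 2 := by
    intro i h1
    exact lwq_cell_bd (hlevpos _ _ h1 (by have := hτle i; omega)) (hτ i).1 (hτ i).2
      (hratio i h1) hLgt1.le
  have hcell0 : ∀ i, τ i = 0 →
      (lev (typeOf i) (τ i + 1) - u i) * (u i - lev (typeOf i) (τ i))
        ≤ (lbar1 - u i) * u i := by
    intro i h0
    rw [h0]
    rw [hlev0 (typeOf i), sub_zero]
    have h1 : lev (typeOf i) (0 + 1) ≤ lbar1 := hlev1le (typeOf i)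
    exact mul_le_mul_of_nonneg_right (by linarith) (hu0 i)
  -- sums
  set T : ℝ := ∑ i, (lev (typeOf i) (τ i + 1) - u i) * (u i - lev (typeOf i) (τ i)) with hTdef
  set S : ℝ := ∑ i, u i ^ 2 with hSdef
  set I0 : Finset (Fin d) := Finset.univ.filter (fun i => τ i = 0) with hI0def
  set S0 : ℝ := ∑ i ∈ I0, u i ^ 2 with hS0def
  set S1 : ℝ := ∑ i ∈ Finset.univ.filter (fun i => ¬ τ i = 0), u i ^ 2 with hS1def
  set U0 : ℝ := ∑ i ∈ I0, u i with hU0def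
  have hS01 : S0 + S1 = S :=
    Finset.sum_filter_add_sum_filter_not _ _ _
  have hS0nn : 0 ≤ S0 := Finset.sum_nonneg fun i _ => sq_nonneg _
  have hS1nn : 0 ≤ S1 := Finset.sum_nonneg fun i _ => sq_nonneg _
  have hU0nn : 0 ≤ U0 := Finset.sum_nonneg fun i _ => hu0 i
  have hSnn : 0 ≤ S := by rw [← hS01]; linarith
  -- the key sum decomposition bound
  have hTsplit : T ≤ (lbar1 * U0 - S0) + A * S1 := by
    rw [hTdef, ← Finset.sum_filter_add_sum_filter_not Finset.univ (fun i => τ i = 0)]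
    have hb0 : ∑ i ∈ I0, (lev (typeOf i) (τ i + 1) - u i) * (u i - lev (typeOf i) (τ i))
        ≤ lbar1 * U0 - S0 := by
      have : ∀ i ∈ I0, (lev (typeOf i) (τ i + 1) - u i) * (u i - lev (typeOf i) (τ i))
          ≤ lbar1 * u i - u i ^ 2 := by
        intro i hi
        have h0 : τ i = 0 := (Finset.mem_filter.1 hi).2
        have := hcell0 i h0
        linarith [this, sq_abs (u i)]
      calc ∑ i ∈ I0, (lev (typeOf i) (τ i + 1) - u i) * (u i - lev (typeOf i) (τ i))
          ≤ ∑ i ∈ I0, (lbar1 * u i - u i ^ 2) := Finset.sum_le_sum this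
        _ = lbar1 * U0 - S0 := by
            rw [Finset.sum_sub_distrib, ← Finset.mul_sum, hU0def, hS0def]
    have hb1 : ∑ i ∈ Finset.univ.filter (fun i => ¬ τ i = 0),
        (lev (typeOf i) (τ i + 1) - u i) * (u i - lev (typeOf i) (τ i)) ≤ A * S1 := by
      rw [hS1def, Finset.mul_sum]
      refine Finset.sum_le_sum fun i hi => ?_
      have h1 : 1 ≤ τ i := by
        have := (Finset.mem_filter.1 hi).2; omega
      exact hcell i h1
    linarith
  -- it suffices to bound T by εQ * S
  have hvsum : ∑ i, v i ^ 2 = N ^ 2 * S := by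
    rw [hSdef, Finset.mul_sum]
    refine Finset.sum_congr rfl fun i _ => ?_
    rw [← sq_abs (v i), habs i]; ring
  have hdpos : (0:ℝ) < (d:ℝ) := by exact_mod_cast Nat.lt_of_lt_of_le Nat.zero_lt_one hd
  have hcard0 : ((I0.card : ℕ) : ℝ) ≤ (d:ℝ) := by
    have h := Finset.card_filter_le Finset.univ (fun i => τ i = 0)
    simp only [Finset.card_univ, Fintype.card_fin] at h
    exact_mod_cast h
  have hmain : T ≤ εQ * S := by
    rcases le_or_gt dth (d:ℝ) with hc | hc
    · -- case d ≥ d_th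
      set D : ℝ := (d:ℝ) ^ ((1:ℝ)/((min q 2 : ℕ):ℝ)) with hDdef
      set x : ℝ := lbar1 * D with hxdef
      have hεQ' : εQ = A + (x - 1) := by
        rw [hεQ, if_pos hc, if_neg (not_lt.2 hc), hAdef]; ring
      have hkey : 2 ≤ x ∧ lbar1 * U0 ≤ x * S0 + (x - 1) * S1 := by
        rcases Nat.lt_or_ge q 2 with hq2 | hq2
        · -- q = 1
          have hq1 : q = 1 := by omega
          have hD : D = (d:ℝ) := by rw [hDdef, hq1]; norm_num
          have hdth1 : dth = 2 / lbar1 := by rw [hdth, hq1]; norm_num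
          have hx2 : 2 ≤ x := by
            rw [hdth1, div_le_iff₀ hl1pos] at hc
            rw [hxdef, hD]
            linarith [hc, mul_comm (d:ℝ) lbar1]
          refine ⟨hx2, ?_⟩
          set U1 : ℝ := ∑ i ∈ Finset.univ.filter (fun i => ¬ τ i = 0), u i with hU1def
          have hU1nn : 0 ≤ U1 := Finset.sum_nonneg fun i _ => hu0 i
          have hsum1 : U0 + U1 = 1 := by
            rw [hU0def, hU1def, Finset.sum_filter_add_sum_filter_not]
            simpa [hq1] using hsumq
          have hxpos : (0:ℝ) < x := by linarith
          set c : ℝ := Real.sqrt ((x-1)/x) with hcdef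
          have hc0 : 0 ≤ c := Real.sqrt_nonneg _
          have hc2 : c^2 = (x-1)/x := Real.sq_sqrt (by apply div_nonneg <;> linarith)
          have hxc : x * c^2 = x - 1 := by rw [hc2]; field_simp
          have hc21 : (1:ℝ)/4 ≤ c^2 := by
            rw [hc2, le_div_iff₀ hxpos]; linarith
          have hchalf : (1:ℝ)/2 ≤ c := lwq_half hc0 hc21
          have hCS := sq_sum_le_card_mul_sum_sq (s := Finset.univ)
            (f := fun i : Fin d => if τ i = 0 then u i else c * u i)
          simp only [Finset.card_univ, Fintype.card_fin] at hCS
          have hsplit1 : ∑ i, (if τ i = 0 then u i else c*u i) = U0 + c*U1 := by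
            rw [← Finset.sum_filter_add_sum_filter_not Finset.univ (fun i => τ i = 0)]
            congr 1
            · exact Finset.sum_congr rfl fun i hi => if_pos (Finset.mem_filter.1 hi).2
            · rw [hU1def, Finset.mul_sum]
              exact Finset.sum_congr rfl fun i hi => if_neg (Finset.mem_filter.1 hi).2
          have hsplit2 : ∑ i, (if τ i = 0 then u i else c*u i)^2 = S0 + c^2*S1 := by
            rw [← Finset.sum_filter_add_sum_filter_not Finset.univ (fun i => τ i = 0)]
            congr 1
            · refine Finset.sum_congr rfl fun i hi => ?_
              rw [if_pos (Finset.mem_filter.1 hi).2]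
            · rw [hS1def, Finset.mul_sum]
              refine Finset.sum_congr rfl fun i hi => ?_
              rw [if_neg (Finset.mem_filter.1 hi).2]; ring
          rw [hsplit1, hsplit2] at hCS
          have hU0le : U0 ≤ (U0 + c*U1)^2 := lwq_u0le hU0nn hU1nn hsum1 hchalf
          have h1 : x * U0 ≤ x * ((U0 + c*U1)^2) := mul_le_mul_of_nonneg_left hU0le hxpos.le
          have h2 : x * ((U0+c*U1)^2) ≤ x * ((d:ℝ) * (S0 + c^2*S1)) :=
            mul_le_mul_of_nonneg_left hCS hxpos.le
          have e : x * ((d:ℝ) * (S0 + c^2*S1)) = (d:ℝ)*(x*S0) + (d:ℝ)*((x*c^2)*S1) := by ring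
          rw [hxc] at e
          have h3 : (d:ℝ) * (lbar1 * U0) ≤ (d:ℝ) * (x*S0 + (x-1)*S1) := by
            have e2 : (d:ℝ) * (lbar1 * U0) = x * U0 := by rw [hxdef, hD]; ring
            calc (d:ℝ)*(lbar1*U0) = x*U0 := e2
              _ ≤ x*((d:ℝ)*(S0+c^2*S1)) := le_trans h1 h2
              _ = (d:ℝ)*(x*S0) + (d:ℝ)*((x-1)*S1) := e
              _ = (d:ℝ)*(x*S0 + (x-1)*S1) := by ring
          exact le_of_mul_le_mul_left h3 hdpos
        · -- q ≥ 2
          have hmin2 : (min q 2 : ℕ) = 2 := min_eq_right hq2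
          have hD0 : 0 ≤ D := by rw [hDdef]; positivity
          have hD2 : D^2 = (d:ℝ) := by
            rw [hDdef, hmin2, ← Real.rpow_natCast ((d:ℝ) ^ ((1:ℝ)/((2:ℕ):ℝ))) 2,
              ← Real.rpow_mul (Nat.cast_nonneg d)]
            norm_num
          have hx2 : 2 ≤ x := by
            have hdth2 : dth = (2/lbar1)^2 := by rw [hdth, min_eq_left hq2]
            have ht : 2/lbar1 ≤ D := by
              have h' : (2/lbar1)^2 ≤ D^2 := by rw [hD2, ← hdth2]; exact hc
              exact (pow_le_pow_iff_left₀ (by positivity) hD0 two_ne_zero).1 h'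
            rw [div_le_iff₀ hl1pos] at ht
            rw [hxdef]
            linarith [ht, mul_comm D lbar1]
          have hSge1 : 1 ≤ S := by
            rw [hSdef, ← hsumq]
            exact Finset.sum_le_sum fun i _ => pow_le_pow_of_le_one (hu0 i) (hu1 i) hq2
          have hCS := sq_sum_le_card_mul_sum_sq (s := I0) (f := u)
          have hU02 : U0^2 ≤ (d:ℝ) * S0 := by
            refine le_trans hCS ?_
            exact mul_le_mul_of_nonneg_right hcard0 hS0nn
          have hy2 : (lbar1*U0)^2 ≤ x^2*S0 := by
            have hxx : x^2 = lbar1^2*(d:ℝ) := by rw [hxdef, mul_pow, hD2]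
            rw [hxx, mul_pow]
            linarith [mul_le_mul_of_nonneg_left hU02 (sq_nonneg lbar1)]
          exact ⟨hx2, lwq_core2 hx2 hS0nn hS1nn (by linarith)
            (mul_nonneg hl1pos.le hU0nn) hy2⟩
      obtain ⟨hx2, hkey⟩ := hkey
      rw [hεQ', ← hS01]
      exact lwq_comb1 hTsplit hkey hA0 hS0nn
    · -- case d < d_th
      set E : ℝ := (d:ℝ) ^ ((2:ℝ)/((min q 2 : ℕ):ℝ)) with hEdef
      have hεQ'' : εQ = A + (lbar1^2/4) * E := by
        rw [hεQ, if_neg (not_le.2 hc), if_pos hc, hAdef]; ring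
      have hdE : (d:ℝ) ≤ E * S := by
        rcases Nat.lt_or_ge q 2 with hq2 | hq2
        · have hq1 : q = 1 := by omega
          have hE : E = (d:ℝ)^(2:ℕ) := by
            rw [hEdef, hq1]
            norm_num
          have h1 : (1:ℝ) ≤ (d:ℝ) * S := by
            have hCS := sq_sum_le_card_mul_sum_sq (s := Finset.univ) (f := u)
            simp only [Finset.card_univ, Fintype.card_fin] at hCS
            have hsum1 : ∑ i, u i = 1 := by simpa [hq1] using hsumq
            rw [hsum1] at hCS
            simpa [hSdef] using hCS
          rw [hE]
          linarith [mul_le_mul_of_nonneg_left h1 hdpos.le]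
        · have hE : E = (d:ℝ) := by
            rw [hEdef, min_eq_right hq2]
            norm_num
          have hSge1 : 1 ≤ S := by
            rw [hSdef, ← hsumq]
            exact Finset.sum_le_sum fun i _ => pow_le_pow_of_le_one (hu0 i) (hu1 i) hq2
          rw [hE]
          linarith [mul_le_mul_of_nonneg_left hSge1 hdpos.le]
      have hI0bd : lbar1 * U0 - S0 ≤ ((I0.card : ℕ) : ℝ) * (lbar1^2/4) := by
        have hpt : ∀ i ∈ I0, lbar1 * u i - u i^2 ≤ lbar1^2/4 := fun i _ =>
          lwq_amgm lbar1 (u i)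
        calc lbar1*U0 - S0 = ∑ i ∈ I0, (lbar1*u i - u i^2) := by
              rw [Finset.sum_sub_distrib, ← Finset.mul_sum, hU0def, hS0def]
          _ ≤ ∑ _i ∈ I0, (lbar1^2/4) := Finset.sum_le_sum hpt
          _ = ((I0.card : ℕ) : ℝ) * (lbar1^2/4) := by
              rw [Finset.sum_const, nsmul_eq_mul]
      have hx0 : ((I0.card : ℕ) : ℝ) * (lbar1^2/4) ≤ (d:ℝ) * (lbar1^2/4) :=
        mul_le_mul_of_nonneg_right hcard0 (by positivity)
      have hx1 : (d:ℝ) * (lbar1^2/4) ≤ (E*S) * (lbar1^2/4) :=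
        mul_le_mul_of_nonneg_right hdE (by positivity)
      have hA1 : A * S1 ≤ A * S :=
        mul_le_mul_of_nonneg_left (by linarith) hA0
      rw [hεQ'']
      linarith [hTsplit, hI0bd, hx0, hx1, hA1]
  calc N ^ 2 * T ≤ N ^ 2 * (εQ * S) := by
        exact mul_le_mul_of_nonneg_left hmain (by positivity)
    _ = εQ * (N ^ 2 * S) := by ring
    _ = εQ * ∑ i, v i ^ 2 := by rw [hvsum]
end

section
/- Let B ≥ 0, T ∈ ℕ, s ∈ ℕ, and r ∈ [0,1). Let a_1, …, a_T be non-negative real numbers with a_t ≤ B for every t, and set λ_t = Σ_{i=1}^t a_i for t ≥ 1 and λ_t = 0 for t ≤ 0. Then Σ_{t=1}^T a_t / (1 + λ_{t−s})^r ≤ λ_T^{1−r}/(1−r) + sB. -/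
open Finset

/-- Key concavity inequality: for `0 ≤ u ≤ v ≤ d` with `1 ≤ d` and `r ∈ [0,1)`,
`(v - u)/d^r ≤ (v^(1-r) - u^(1-r))/(1-r)`. -/
private lemma rpow_diff_bound {u v d r : ℝ} (hr0 : 0 ≤ r) (hr1 : r < 1)
    (hu : 0 ≤ u) (huv : u ≤ v) (hvd : v ≤ d) (hd : 1 ≤ d) :
    (v - u) / d ^ r ≤ (v ^ (1 - r) - u ^ (1 - r)) / (1 - r) := by
  have h1r : (0:ℝ) < 1 - r := by linarith
  have hv : 0 ≤ v := le_trans hu huv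
  rcases eq_or_lt_of_le hv with h | hvpos
  · have hv0 : v = 0 := h.symm
    have hu0 : u = 0 := le_antisymm (hv0 ▸ huv) hu
    simp [hv0, hu0, Real.zero_rpow (ne_of_gt h1r)]
  · have hd0 : (0:ℝ) < d := lt_of_lt_of_le one_pos hd
    have hdr : (0:ℝ) < d ^ r := Real.rpow_pos_of_pos hd0 r
    rw [div_le_div_iff₀ hdr h1r]
    have hX : 0 ≤ v ^ (1 - r) - u ^ (1 - r) := by
      have := Real.rpow_le_rpow hu huv (le_of_lt h1r)
      linarith
    have hvr : v ^ r ≤ d ^ r := Real.rpow_le_rpow hv hvd hr0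
    have step1 : (v ^ (1 - r) - u ^ (1 - r)) * v ^ r
        ≤ (v ^ (1 - r) - u ^ (1 - r)) * d ^ r :=
      mul_le_mul_of_nonneg_left hvr hX
    have hgm : u ^ (1 - r) * v ^ r ≤ (1 - r) * u + r * v :=
      Real.geom_mean_le_arith_mean2_weighted (le_of_lt h1r) hr0 hu hv (by ring)
    have hvv : v ^ (1 - r) * v ^ r = v := by
      rw [← Real.rpow_add hvpos]; simp
    nlinarith [hgm, hvv, step1]

/-- **Summation bound.** For non-negative `a_t ≤ B`, `λ_t = Σ_{i=1}^t a_i` (and `λ_t = 0`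
for `t ≤ 0`), `s ∈ ℕ`, and `r ∈ [0,1)`:
`Σ_{t=1}^T a_t/(1+λ_{t−s})^r ≤ λ_T^{1−r}/(1−r) + sB`. -/
theorem summation_shift_bound
    (B : ℝ) (hB : 0 ≤ B) (T s : ℕ) (r : ℝ) (hr0 : 0 ≤ r) (hr1 : r < 1)
    (a : ℕ → ℝ) (ha : ∀ t, 0 ≤ a t) (haB : ∀ t, a t ≤ B)
    (lam : ℤ → ℝ)
    (hlam_neg : ∀ t : ℤ, t ≤ 0 → lam t = 0)
    (hlam : ∀ t : ℕ, 1 ≤ t → lam (t : ℤ) = ∑ i ∈ Finset.Icc 1 t, a i) :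
    ∑ t ∈ Finset.Icc 1 T, a t / (1 + lam ((t : ℤ) - (s : ℤ))) ^ r
      ≤ lam (T : ℤ) ^ (1 - r) / (1 - r) + (s : ℝ) * B := by
  have h1r : (0:ℝ) < 1 - r := by linarith
  set c : ℝ := (s : ℝ) * B with hc_def
  have hc : 0 ≤ c := mul_nonneg (Nat.cast_nonneg s) hB
  -- partial sums with natural index
  set L : ℕ → ℝ := fun t => ∑ i ∈ Icc 1 t, a i with hL_def
  have hL0 : L 0 = 0 := by simp [hL_def]
  have hLnn : ∀ t, 0 ≤ L t := fun t => Finset.sum_nonneg (fun i _ => ha i)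
  have hLsucc : ∀ i : ℕ, L (i + 1) = L i + a (i + 1) := by
    intro i
    exact Finset.sum_Icc_succ_top (Nat.le_add_left 1 i) a
  have hLmono : Monotone L := by
    intro i j hij
    exact Finset.sum_le_sum_of_subset_of_nonneg
      (Finset.Icc_subset_Icc le_rfl hij) (fun k _ _ => ha k)
  -- lam on naturals equals L
  have hlamL : ∀ t : ℕ, lam (t : ℤ) = L t := by
    intro t
    rcases Nat.eq_zero_or_pos t with h | h
    · subst h; simp [hlam_neg 0 le_rfl, hL0]
    · exact hlam t h
  -- the shifted value
  have hshift : ∀ t : ℕ, lam ((t : ℤ) - (s : ℤ)) = L (t - s) := by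
    intro t
    rcases le_or_gt t s with h | h
    · rw [hlam_neg _ (by omega), Nat.sub_eq_zero_of_le h, hL0]
    · have h1 : ((t - s : ℕ) : ℤ) = (t : ℤ) - (s : ℤ) := by omega
      rw [← h1, hlamL]
  -- gap bound: L t - L (t - s) ≤ c
  have hgap : ∀ t : ℕ, L t - L (t - s) ≤ c := by
    intro t
    have hsub : t - s ≤ t := Nat.sub_le t s
    have hsplit : L (t - s) + ∑ i ∈ Ioc (t - s) t, a i = L t := by
      have e : ∀ n : ℕ, L n = ∑ i ∈ Ioc 0 n, a i := by
        intro n; rw [hL_def]; rw [← Finset.Icc_add_one_left_eq_Ioc]; rfl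
      rw [e (t - s), e t]
      exact Finset.sum_Ioc_consecutive a (Nat.zero_le _) hsub
    have hcard : (Ioc (t - s) t).card = t - (t - s) := Nat.card_Ioc _ _
    have hbd : ∑ i ∈ Ioc (t - s) t, a i ≤ ((t - (t - s) : ℕ) : ℝ) * B := by
      calc ∑ i ∈ Ioc (t - s) t, a i ≤ (Ioc (t - s) t).card • B :=
            Finset.sum_le_card_nsmul _ _ B (fun i _ => haB i)
        _ = ((t - (t - s) : ℕ) : ℝ) * B := by rw [hcard, nsmul_eq_mul]
    have hle : ((t - (t - s) : ℕ) : ℝ) ≤ (s : ℝ) := by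
      have : t - (t - s) ≤ s := by omega
      exact_mod_cast this
    have : ∑ i ∈ Ioc (t - s) t, a i ≤ c := by
      calc ∑ i ∈ Ioc (t - s) t, a i ≤ ((t - (t - s) : ℕ) : ℝ) * B := hbd
        _ ≤ (s : ℝ) * B := mul_le_mul_of_nonneg_right hle hB
    linarith
  -- Lyapunov function
  set F : ℕ → ℝ := fun t => min (L t) c + (max (L t - c) 0) ^ (1 - r) / (1 - r)
    with hF_def
  have hF0 : F 0 = 0 := by
    simp [hF_def, hL0, min_eq_left hc, max_eq_right (by linarith : -c ≤ (0:ℝ)),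
      Real.zero_rpow (ne_of_gt h1r)]
  -- key per-term inequality
  have key : ∀ i : ℕ,
      a (i + 1) / (1 + lam (((i + 1 : ℕ) : ℤ) - (s : ℤ))) ^ r ≤ F (i + 1) - F i := by
    intro i
    set t := i + 1 with ht_def
    rw [hshift t]
    set d : ℝ := 1 + L (t - s) with hd_def
    have hd1 : (1:ℝ) ≤ d := by have := hLnn (t - s); simp [hd_def]; linarith
    have hdr1 : (1:ℝ) ≤ d ^ r := Real.one_le_rpow hd1 hr0
    have hdr0 : (0:ℝ) < d ^ r := lt_of_lt_of_le one_pos hdr1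
    set x := L i with hx_def
    set y := L t with hy_def
    have hxy : x ≤ y := hLmono (Nat.le_succ i)
    have hay : y = x + a t := hLsucc i
    set u := max (x - c) 0 with hu_def
    set v := max (y - c) 0 with hv_def
    have hu0 : 0 ≤ u := le_max_right _ _
    have huv : u ≤ v := max_le_max (by linarith) le_rfl
    have hvd : v ≤ d := by
      have h2 : y - c ≤ L (t - s) := by have := hgap t; linarith
      exact max_le (by linarith) (by linarith)
    have hmin : min x c ≤ min y c := min_le_min hxy le_rfl
    have hsplit : a t = (min y c - min x c) + (v - u) := by
      have e1 : min x c + u = x := by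
        rcases le_total x c with h | h
        · rw [min_eq_left h, hu_def, max_eq_right (by linarith)]; ring
        · rw [min_eq_right h, hu_def, max_eq_left (by linarith)]; ring
      have e2 : min y c + v = y := by
        rcases le_total y c with h | h
        · rw [min_eq_left h, hv_def, max_eq_right (by linarith)]; ring
        · rw [min_eq_right h, hv_def, max_eq_left (by linarith)]; ring
      linarith
    have hFd : F t - F i = (min y c - min x c) + (v ^ (1 - r) - u ^ (1 - r)) / (1 - r) := by
      simp only [hF_def]
      rw [← hx_def, ← hy_def, ← hu_def, ← hv_def]
      ring
    rw [hFd, hsplit, add_div]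
    have p1 : (min y c - min x c) / d ^ r ≤ min y c - min x c :=
      div_le_self (by linarith) hdr1
    have p2 : (v - u) / d ^ r ≤ (v ^ (1 - r) - u ^ (1 - r)) / (1 - r) :=
      rpow_diff_bound hr0 hr1 hu0 huv hvd hd1
    linarith
  -- assemble
  have hreindex : ∑ t ∈ Icc 1 T, a t / (1 + lam ((t : ℤ) - (s : ℤ))) ^ r
      = ∑ i ∈ range T, a (i + 1) / (1 + lam (((i + 1 : ℕ) : ℤ) - (s : ℤ))) ^ r := by
    rw [show Icc 1 T = Ico 1 (T + 1) by rw [Finset.Ico_add_one_right_eq_Icc],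
      Finset.sum_Ico_eq_sum_range]
    simp [add_comm]
  rw [hreindex]
  have hsum : ∑ i ∈ range T, a (i + 1) / (1 + lam (((i + 1 : ℕ) : ℤ) - (s : ℤ))) ^ r
      ≤ F T - F 0 := by
    rw [← Finset.sum_range_sub F T]
    exact Finset.sum_le_sum (fun i _ => key i)
  have hFT : F T ≤ lam (T : ℤ) ^ (1 - r) / (1 - r) + c := by
    rw [hlamL T]
    have h1 : min (L T) c ≤ c := min_le_right _ _
    have h2 : max (L T - c) 0 ≤ L T := max_le (by linarith [hc]) (hLnn T)
    have h3 : (max (L T - c) 0) ^ (1 - r) ≤ (L T) ^ (1 - r) :=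
      Real.rpow_le_rpow (le_max_right _ _) h2 (le_of_lt h1r)
    have h4 : (max (L T - c) 0) ^ (1 - r) / (1 - r) ≤ (L T) ^ (1 - r) / (1 - r) := by
      exact div_le_div_of_nonneg_right h3 h1r.le
    simp only [hF_def]
    linarith
  calc ∑ i ∈ range T, a (i + 1) / (1 + lam (((i + 1 : ℕ) : ℤ) - (s : ℤ))) ^ r
      ≤ F T - F 0 := hsum
    _ = F T := by rw [hF0]; ring
    _ ≤ lam (T : ℤ) ^ (1 - r) / (1 - r) + c := hFT
end

section
/- Consider the ODA iterates in ℝ^d. Then for every p ∈ ℝ^d and every t ≥ 2: ‖X_{t+1} − p‖²/η_{t+1} = ‖X_t − p‖²/η_t − ‖X_t − X_{t+1}‖²/η_t + (1/η_{t+1} − 1/η_t)(‖X₁ − p‖² − ‖X₁ − X_{t+1}‖²) − (2/K)⟨Σ_{k=1}^K V̂_{k,t+1/2}, X_{t+1/2} − p⟩ − (2γ_t/K²)⟨Σ_{k=1}^K V̂_{k,t+1/2}, Σ_{k=1}^K V̂_{k,t−1/2}⟩ + (2/K)⟨Σ_{k=1}^K V̂_{k,t+1/2}, X_t − X_{t+1}⟩.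 -/
open scoped RealInnerProductSpace
open Finset

/-- **Optimistic Dual Averaging (ODA) iterates** with `K` nodes.
`Vh k t` stands for the dual vector `V̂_{k,t+1/2}` (so `Vh k 0 = V̂_{k,1/2} = 0`),
`Xh t` stands for the leading state `X_{t+1/2}`, with `X 1 = 0`, `Y 1 = 0`, and updates
`X_{t+1/2} = X_t − (γ_t/K) Σ_k V̂_{k,t−1/2}`, `Y_{t+1} = Y_t − (1/K) Σ_k V̂_{k,t+1/2}`,
`X_{t+1} = X₁ + η_{t+1} Y_{t+1}`. -/
def ODA {E : Type*} [NormedAddCommGroup E] [InnerProductSpace ℝ E]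
    (K : ℕ) (Vh : Fin K → ℕ → E) (γ η : ℕ → ℝ) (X Xh Y : ℕ → E) : Prop :=
  X 1 = 0 ∧ Y 1 = 0 ∧ (∀ k, Vh k 0 = 0) ∧
  (∀ t, 1 ≤ t → Xh t = X t - (γ t / (K : ℝ)) • ∑ k, Vh k (t - 1)) ∧
  (∀ t, 1 ≤ t → Y (t + 1) = Y t - (K : ℝ)⁻¹ • ∑ k, Vh k t) ∧
  (∀ t, 1 ≤ t → X (t + 1) = X 1 + η (t + 1) • Y (t + 1))

/-- **Energy identity** for ODA with positive non-increasing learning rates: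
for every `p` and `t ≥ 2`. -/
theorem oda_energy_identity
    {d K : ℕ} (hK : 1 ≤ K)
    (Vh : Fin K → ℕ → EuclideanSpace ℝ (Fin d))
    (γ η : ℕ → ℝ)
    (X Xh Y : ℕ → EuclideanSpace ℝ (Fin d))
    (hODA : ODA K Vh γ η X Xh Y)
    (hγpos : ∀ t, 1 ≤ t → 0 < γ t) (hηpos : ∀ t, 1 ≤ t → 0 < η t)
    (hγmono : ∀ t, 1 ≤ t → γ (t + 1) ≤ γ t) (hηmono : ∀ t, 1 ≤ t → η (t + 1) ≤ η t)
    (p : EuclideanSpace ℝ (Fin d)) (t : ℕ) (ht : 2 ≤ t) :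
    ‖X (t + 1) - p‖ ^ 2 / η (t + 1)
      = ‖X t - p‖ ^ 2 / η t - ‖X t - X (t + 1)‖ ^ 2 / η t
        + (1 / η (t + 1) - 1 / η t) * (‖X 1 - p‖ ^ 2 - ‖X 1 - X (t + 1)‖ ^ 2)
        - (2 / (K : ℝ)) * ⟪∑ k, Vh k t, Xh t - p⟫
        - (2 * γ t / (K : ℝ) ^ 2) * ⟪∑ k, Vh k t, ∑ k, Vh k (t - 1)⟫
        + (2 / (K : ℝ)) * ⟪∑ k, Vh k t, X t - X (t + 1)⟫ := by

  obtain ⟨hX1, hY1, hV0, hXh, hY, hX⟩ := hODA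
  obtain ⟨s, rfl⟩ : ∃ s, t = s + 1 := ⟨t - 1, by omega⟩
  have hs1 : 1 ≤ s + 1 := by omega
  have hη1 : η (s + 1) ≠ 0 := (hηpos _ hs1).ne'
  have hη2 : η (s + 1 + 1) ≠ 0 := (hηpos _ (by omega)).ne'
  have hKne : (K : ℝ) ≠ 0 := Nat.cast_ne_zero.mpr (by omega)
  have hXt : X (s + 1) = X 1 + η (s + 1) • Y (s + 1) := hX s (by omega)
  have hXt1 : X (s + 1 + 1) = X 1 + η (s + 1 + 1) • Y (s + 1 + 1) := hX (s + 1) hs1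
  have hSsum : ∑ k, Vh k (s + 1)
      = (K : ℝ) • ((η (s + 1))⁻¹ • (X (s + 1) - X 1)
          - (η (s + 1 + 1))⁻¹ • (X (s + 1 + 1) - X 1)) := by
    have h1 : (η (s+1))⁻¹ • (X (s+1) - X 1) = Y (s+1) := by
      rw [hXt, add_sub_cancel_left, inv_smul_smul₀ hη1]
    have h2 : (η (s+1+1))⁻¹ • (X (s+1+1) - X 1) = Y (s+1+1) := by
      rw [hXt1, add_sub_cancel_left, inv_smul_smul₀ hη2]
    rw [h1, h2, hY (s+1) hs1, sub_sub_cancel, smul_inv_smul₀ hKne]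
  have hXhval := hXh (s + 1) hs1
  simp only [Nat.add_sub_cancel] at hXhval ⊢
  rw [hSsum, hXhval]
  simp only [norm_sub_sq_real, inner_sub_left, inner_sub_right, real_inner_smul_left,
    real_inner_smul_right, real_inner_self_eq_norm_sq]
  simp only [real_inner_comm (X (s+1+1)) (X (s+1)), real_inner_comm (X (s+1+1)) p,
    real_inner_comm (X (s+1+1)) (X 1), real_inner_comm (X (s+1+1)) (∑ k, Vh k s),
    real_inner_comm (X (s+1)) (X 1)]
  field_simp
  ring
end

section
/- Consider the ODA iterates in ℝ^d with non-increasing learning rates satisfying 0 < η_t ≤ γ_t. Then for every p ∈ ℝ^d and every t ≥ 2: ‖X_{t+1} − p‖²/η_{t+1} ≤ ‖X_t − p‖²/η_t + (1/η_{t+1} − 1/η_t)‖X₁ − p‖² − (2/K)⟨Σ_{k=1}^K V̂_{k,t+1/2}, X_{t+1/2} − p⟩ − (2γ_t/K²)⟨Σ_{k=1}^K V̂_{k,t+1/2}, Σ_{k=1}^K V̂_{k,t−1/2}⟩ + (η_t/K²)‖Σ_{k=1}^K V̂_{k,t+1/2}‖² + min( (η_t/K²)‖Σ_{k=1}^K V̂_{k,t+1/2}‖²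 − ‖X_t − X_{t+1}‖²/(2η_t), 0 ). -/
open scoped RealInnerProductSpace
open Finset

lemma oda_key_scalar (η η' A B G cu cg ug : ℝ) (hη' : 0 < η') (hη : η' ≤ η)
    (hV : 0 ≤ B - 2*ug + G)
    (hN : 0 ≤ (η-η')^2*(B-2*ug+G) - 2*η*(η-η')*(ug-G) + η^2*G) :
    (A + 2*η'*(cu - cg) + η'^2*(B - 2*ug + G)) / η'
      ≤ (A + 2*η*cu + η^2*B) / η + (1/η' - 1/η) * A - 2*(cg + η*ug) + η*G
        + min (η*G - ((η-η')^2*(B-2*ug+G) + 2*η*(η-η')*(ug-G) + η^2*G)/(2*η)) 0 := by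
  have hηpos : 0 < η := hη'.trans_le hη
  set L := (A + 2*η'*(cu - cg) + η'^2*(B - 2*ug + G)) / η' with hL
  set R := (A + 2*η*cu + η^2*B) / η + (1/η' - 1/η) * A - 2*(cg + η*ug) + η*G with hR
  set M := η*G - ((η-η')^2*(B-2*ug+G) + 2*η*(η-η')*(ug-G) + η^2*G)/(2*η) with hM
  rcases min_cases M 0 with ⟨hmin, _⟩ | ⟨hmin, _⟩ <;> rw [hmin]
  · -- case min = M
    have hE : 2*η*(R + M - L)
        = ((η-η')^2*(B-2*ug+G) - 2*η*(η-η')*(ug-G) + η^2*G)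
          + 2*(η-η')*η'*(B-2*ug+G) := by
      rw [hL, hR, hM]
      field_simp
      ring
    have h1 : 0 ≤ 2*η*(R + M - L) := by
      rw [hE]
      have h2 : 0 ≤ 2*(η-η')*η'*(B-2*ug+G) :=
        mul_nonneg (mul_nonneg (by linarith) hη'.le) hV
      linarith
    nlinarith [h1, hηpos]
  · -- case min = 0
    have hE : R - L = (η-η')*(B-2*ug+G) := by
      rw [hL, hR]
      field_simp
      ring
    nlinarith [hE, mul_nonneg (sub_nonneg.2 hη) hV]

lemma oda_key {E : Type*} [NormedAddCommGroup E] [InnerProductSpace ℝ E]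
    (c u g : E) (η η' : ℝ) (hη' : 0 < η') (hη : η' ≤ η) :
    ‖c + η' • (u - g)‖ ^ 2 / η' ≤ ‖c + η • u‖ ^ 2 / η + (1 / η' - 1 / η) * ‖c‖ ^ 2
      - 2 * ⟪g, c + η • u⟫ + η * ‖g‖ ^ 2
      + min (η * ‖g‖ ^ 2 - ‖(c + η • u) - (c + η' • (u - g))‖ ^ 2 / (2 * η)) 0 := by
  have e1 : ‖c + η' • (u - g)‖ ^ 2
      = ‖c‖^2 + 2*η'*(⟪c,u⟫ - ⟪c,g⟫) + η'^2*(‖u‖^2 - 2*⟪u,g⟫ + ‖g‖^2) := by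
    rw [norm_add_sq_real, real_inner_smul_right, norm_smul, mul_pow, Real.norm_eq_abs, sq_abs,
      inner_sub_right, norm_sub_sq_real]
    ring
  have e2 : ‖c + η • u‖ ^ 2 = ‖c‖^2 + 2*η*⟪c,u⟫ + η^2*‖u‖^2 := by
    rw [norm_add_sq_real, real_inner_smul_right, norm_smul, mul_pow, Real.norm_eq_abs, sq_abs]
    ring
  have hvec : (c + η • u) - (c + η' • (u - g)) = (η - η') • (u - g) + η • g := by
    module
  have e3 : ‖(c + η • u) - (c + η' • (u - g))‖ ^ 2
      = (η-η')^2*(‖u‖^2 - 2*⟪u,g⟫ + ‖g‖^2)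
        + 2*η*(η-η')*(⟪u,g⟫ - ‖g‖^2) + η^2*‖g‖^2 := by
    rw [hvec, norm_add_sq_real, norm_smul, norm_smul, mul_pow, mul_pow, Real.norm_eq_abs, Real.norm_eq_abs, sq_abs, sq_abs,
      real_inner_smul_left, real_inner_smul_right, inner_sub_left,
      real_inner_self_eq_norm_sq, norm_sub_sq_real]
    ring
  have e4 : ⟪g, c + η • u⟫ = ⟪c,g⟫ + η*⟪u,g⟫ := by
    rw [inner_add_right, real_inner_smul_right, real_inner_comm g c, real_inner_comm g u]
  have hV : (0:ℝ) ≤ ‖u‖^2 - 2*⟪u,g⟫ + ‖g‖^2 := by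
    have h := sq_nonneg ‖u - g‖
    rwa [norm_sub_sq_real] at h
  have hN : (0:ℝ) ≤ (η-η')^2*(‖u‖^2 - 2*⟪u,g⟫ + ‖g‖^2)
      - 2*η*(η-η')*(⟪u,g⟫ - ‖g‖^2) + η^2*‖g‖^2 := by
    have h := sq_nonneg ‖(η - η') • (u - g) - η • g‖
    rw [norm_sub_sq_real, norm_smul, norm_smul, mul_pow, mul_pow, Real.norm_eq_abs, Real.norm_eq_abs, sq_abs, sq_abs,
      real_inner_smul_left, real_inner_smul_right, inner_sub_left,
      real_inner_self_eq_norm_sq, norm_sub_sq_real] at h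
    nlinarith [h]
  rw [e1, e2, e3, e4]
  exact oda_key_scalar η η' (‖c‖^2) (‖u‖^2) (‖g‖^2) ⟪c,u⟫ ⟪c,g⟫ ⟪u,g⟫ hη' hη hV hN

/-- **Energy inequality** for ODA with positive non-increasing learning rates
satisfying `η_t ≤ γ_t`: for every `p` and `t ≥ 2`. -/
theorem oda_energy_inequality
    {d K : ℕ} (hK : 1 ≤ K)
    (Vh : Fin K → ℕ → EuclideanSpace ℝ (Fin d))
    (γ η : ℕ → ℝ)
    (X Xh Y : ℕ → EuclideanSpace ℝ (Fin d))
    (hODA : ODA K Vh γ η X Xh Y)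
    (hγpos : ∀ t, 1 ≤ t → 0 < γ t) (hηpos : ∀ t, 1 ≤ t → 0 < η t)
    (hγmono : ∀ t, 1 ≤ t → γ (t + 1) ≤ γ t) (hηmono : ∀ t, 1 ≤ t → η (t + 1) ≤ η t)
    (hηγ : ∀ t, 1 ≤ t → η t ≤ γ t)
    (p : EuclideanSpace ℝ (Fin d)) (t : ℕ) (ht : 2 ≤ t) :
    ‖X (t + 1) - p‖ ^ 2 / η (t + 1)
      ≤ ‖X t - p‖ ^ 2 / η t
        + (1 / η (t + 1) - 1 / η t) * ‖X 1 - p‖ ^ 2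
        - (2 / (K : ℝ)) * ⟪∑ k, Vh k t, Xh t - p⟫
        - (2 * γ t / (K : ℝ) ^ 2) * ⟪∑ k, Vh k t, ∑ k, Vh k (t - 1)⟫
        + (η t / (K : ℝ) ^ 2) * ‖∑ k, Vh k t‖ ^ 2
        + min ((η t / (K : ℝ) ^ 2) * ‖∑ k, Vh k t‖ ^ 2
            - ‖X t - X (t + 1)‖ ^ 2 / (2 * η t)) 0 := by
  
  obtain ⟨hX1, hY1, hV0, hXhup, hYup, hXup⟩ := hODA
  have ht1 : 1 ≤ t := by omega
  have hKpos : (0:ℝ) < K := by exact_mod_cast Nat.lt_of_lt_of_le Nat.zero_lt_one hK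
  have hKne : (K:ℝ) ≠ 0 := ne_of_gt hKpos
  set S : EuclideanSpace ℝ (Fin d) := ∑ k, Vh k t with hS
  set S' : EuclideanSpace ℝ (Fin d) := ∑ k, Vh k (t - 1) with hS'
  set c : EuclideanSpace ℝ (Fin d) := X 1 - p with hc
  set u : EuclideanSpace ℝ (Fin d) := Y t with hu
  set g : EuclideanSpace ℝ (Fin d) := (K:ℝ)⁻¹ • S with hg
  have hYt1 : Y (t + 1) = u - g := hYup t ht1
  have hXt1 : X (t + 1) = X 1 + η (t + 1) • Y (t + 1) := hXup t ht1
  have hXt : X t = X 1 + η t • u := by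
    have h := hXup (t - 1) (by omega)
    rw [show t - 1 + 1 = t from by omega] at h
    exact h
  have hXht : Xh t = X t - (γ t / (K:ℝ)) • S' := hXhup t ht1
  have hXtp : X t - p = c + η t • u := by rw [hXt, hc]; abel
  have hXt1p : X (t + 1) - p = c + η (t + 1) • (u - g) := by
    rw [hXt1, hYt1, hc]; abel
  have hdiff : X t - X (t + 1) = (c + η t • u) - (c + η (t + 1) • (u - g)) := by
    rw [← hXtp, ← hXt1p]; abel
  have hnormg : (η t / (K:ℝ) ^ 2) * ‖S‖ ^ 2 = η t * ‖g‖ ^ 2 := by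
    rw [hg, norm_smul, mul_pow, Real.norm_eq_abs, sq_abs]
    field_simp
  have hinner : (2 / (K:ℝ)) * ⟪S, Xh t - p⟫ + (2 * γ t / (K:ℝ) ^ 2) * ⟪S, S'⟫
      = 2 * ⟪g, c + η t • u⟫ := by
    have h1 : Xh t - p = (c + η t • u) - (γ t / (K:ℝ)) • S' := by
      rw [hXht, ← hXtp]; abel
    rw [h1, inner_sub_right, real_inner_smul_right, hg, real_inner_smul_left]
    field_simp
    ring
  have hη'pos : 0 < η (t + 1) := hηpos (t + 1) (by omega)
  have hηle : η (t + 1) ≤ η t := hηmono t ht1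
  have hkey := oda_key c u g (η t) (η (t + 1)) hη'pos hηle
  rw [hXtp, hXt1p, hdiff, hnormg]
  linarith [hkey, hinner]
end
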